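/- There exists a universal constant $C>0$ with the following property. Let $\bar f:[0,1]\to[0,\infty)$ be continuously differentiable and concave with $\bar f(1)=0$, let $f:[0,1]\to\mathbb R$ be continuous with $|f|\le\bar f$ on $[0,1]$, let $n\ge 1$ be an integer and $r\in(0,1)$. Then $\Big| n\,r^{4n-2}\int_r^1 \tau^{1-4n} f(\tau)\,d\tau \Big| \le C\Big(\bar f(r) + \frac{1}{n}\sup_{\tau\in[0,r]} \tau\,\bar f'(\tau)\Big).$ -/

import Mathlib

set_option maxHeartbeats 1000000


open Real MeasureTheory Set intervalIntegral

theorem stmt5 :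
    ∃ C > (0:ℝ), ∀ (fbar : ℝ → ℝ),
      (∀ r ∈ Set.Icc (0:ℝ) 1, 0 ≤ fbar r) →
      (∀ x ∈ Set.Icc (0:ℝ) 1, DifferentiableAt ℝ fbar x) →
      ContinuousOn (deriv fbar) (Set.Icc 0 1) →
      ConcaveOn ℝ (Set.Icc 0 1) fbar →
      fbar 1 = 0 →
      ∀ (f : ℝ → ℝ), ContinuousOn f (Set.Icc 0 1) →
      (∀ r ∈ Set.Icc (0:ℝ) 1, |f r| ≤ fbar r) →
      ∀ (n : ℕ), 1 ≤ n → ∀ r ∈ Set.Ioo (0:ℝ) 1,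
        |(n:ℝ) * r ^ (4 * (n:ℤ) - 2) * ∫ τ in r..(1:ℝ), τ ^ (1 - 4 * (n:ℤ)) * f τ|
          ≤ C * (fbar r + (1 / (n:ℝ)) *
              sSup ((fun τ => τ * deriv fbar τ) '' Set.Icc 0 r)) := by
  refine ⟨1, one_pos, ?_⟩
  intro fbar hfpos hdiff hderiv hconc hf1 f hfc hfle n hn r hr
  obtain ⟨hr0, hr1⟩ := hr
  set N : ℝ := (n : ℝ) with hNdef
  have hN : (1:ℝ) ≤ N := by rw [hNdef]; exact_mod_cast hn
  set m : ℤ := 4 * (n : ℤ) with hmdef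
  have hm4 : (4:ℤ) ≤ m := by omega
  have hmcast : ((m : ℤ) : ℝ) = 4 * N := by push_cast [hmdef]; ring
  have hsub : Icc r 1 ⊆ Icc (0:ℝ) 1 := Icc_subset_Icc hr0.le le_rfl
  have hrle : r ≤ (1:ℝ) := hr1.le
  have huIcc : Set.uIcc r (1:ℝ) = Icc r 1 := uIcc_of_le hrle
  have hpos : ∀ τ ∈ Icc r (1:ℝ), (0:ℝ) < τ := fun τ hτ => lt_of_lt_of_le hr0 hτ.1
  -- sSup facts
  set M : ℝ := sSup ((fun τ => τ * deriv fbar τ) '' Set.Icc 0 r) with hMdef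
  have hcontM : ContinuousOn (fun τ => τ * deriv fbar τ) (Icc 0 r) :=
    continuousOn_id.mul (hderiv.mono (Icc_subset_Icc le_rfl hr1.le))
  have hbdd : BddAbove ((fun τ => τ * deriv fbar τ) '' Set.Icc 0 r) :=
    (isCompact_Icc.image_of_continuousOn hcontM).bddAbove
  have hM0 : (0:ℝ) ≤ M := by
    have : (0:ℝ) * deriv fbar 0 ∈ (fun τ => τ * deriv fbar τ) '' Set.Icc 0 r :=
      mem_image_of_mem _ ⟨le_rfl, hr0.le⟩
    simpa using le_csSup hbdd this
  have hMr : r * deriv fbar r ≤ M :=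
    le_csSup hbdd (mem_image_of_mem _ ⟨hr0.le, le_rfl⟩)
  -- A = max (deriv fbar r) 0
  set A : ℝ := max (deriv fbar r) 0 with hAdef
  have hA0 : 0 ≤ A := le_max_right _ _
  have hrA : r * A ≤ M := by
    rcases le_or_gt (deriv fbar r) 0 with h | h
    · have : A = 0 := max_eq_right h
      rw [this, mul_zero]; exact hM0
    · have : A = deriv fbar r := max_eq_left h.le
      rw [this]; exact hMr
  -- antitone derivative
  have hanti : AntitoneOn (deriv fbar) (Icc 0 1) := hconc.antitoneOn_deriv hdiff
  -- continuity helpers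
  have hzpow : ∀ (k : ℤ), ContinuousOn (fun τ : ℝ => τ ^ k) (Icc r 1) := fun k τ hτ =>
    (continuousAt_zpow₀ τ k (Or.inl (hpos τ hτ).ne')).continuousWithinAt
  have hfbarc : ContinuousOn fbar (Icc r 1) := fun x hx =>
    (hdiff x (hsub hx)).continuousAt.continuousWithinAt
  have hintf : IntervalIntegrable (fun τ => τ ^ (1 - m) * f τ) volume r 1 :=
    (((hzpow (1-m)).mul (hfc.mono hsub))).intervalIntegrable_of_Icc hrle
  have hintabs : IntervalIntegrable (fun τ => |τ ^ (1 - m) * f τ|) volume r 1 :=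
    ((((hzpow (1-m)).mul (hfc.mono hsub))).abs).intervalIntegrable_of_Icc hrle
  have hintfbar : IntervalIntegrable (fun τ => τ ^ (1 - m) * fbar τ) volume r 1 :=
    (((hzpow (1-m)).mul hfbarc)).intervalIntegrable_of_Icc hrle
  have hintK : IntervalIntegrable (fun τ => deriv fbar τ * τ ^ (2 - m)) volume r 1 :=
    (((hderiv.mono hsub).mul (hzpow (2-m)))).intervalIntegrable_of_Icc hrle
  have hintKA : IntervalIntegrable (fun τ => A * τ ^ (2 - m)) volume r 1 :=
    ((continuousOn_const.mul (hzpow (2-m)))).intervalIntegrable_of_Icc hrle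
  -- |I| ≤ J
  set I : ℝ := ∫ τ in r..(1:ℝ), τ ^ (1 - m) * f τ with hIdef
  set J : ℝ := ∫ τ in r..(1:ℝ), τ ^ (1 - m) * fbar τ with hJdef
  have hIJ : |I| ≤ J := by
    calc |I| ≤ ∫ τ in r..(1:ℝ), |τ ^ (1 - m) * f τ| :=
          intervalIntegral.abs_integral_le_integral_abs hrle
      _ ≤ J := by
          apply intervalIntegral.integral_mono_on hrle hintabs hintfbar
          intro x hx
          have hx0 : (0:ℝ) < x := hpos x hx
          have hxp : (0:ℝ) ≤ x ^ (1 - m) := le_of_lt (zpow_pos hx0 _)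
          rw [abs_mul, abs_of_nonneg hxp]
          exact mul_le_mul_of_nonneg_left (hfle x (hsub hx)) hxp
  -- Integration by parts
  set d : ℝ := ((2 - m : ℤ) : ℝ) with hddef
  have hdval : d = 2 - 4 * N := by rw [hddef]; push_cast [hmdef]; ring
  have hdne : d ≠ 0 := by rw [hdval]; nlinarith
  set K : ℝ := ∫ τ in r..(1:ℝ), deriv fbar τ * τ ^ (2 - m) with hKdef
  have hIBP : J = -(fbar r * (r ^ (2 - m) / d)) - K / d := by
    have h := intervalIntegral.integral_mul_deriv_eq_deriv_mul_of_hasDerivAt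
      (u := fbar) (v := fun x : ℝ => x ^ (2 - m) / d)
      (u' := deriv fbar) (v' := fun x : ℝ => x ^ (1 - m)) (a := r) (b := 1)
      (by rw [huIcc]; exact hfbarc)
      (by rw [huIcc]; exact (hzpow (2-m)).div_const d)
      (by
        intro x hx
        rw [min_eq_left hrle, max_eq_right hrle] at hx
        exact (hdiff x (hsub (Ioo_subset_Icc_self hx))).hasDerivAt)
      (by
        intro x hx
        rw [min_eq_left hrle, max_eq_right hrle] at hx
        have hx0 : x ≠ 0 := (hpos x (Ioo_subset_Icc_self hx)).ne'
        have h1 := (hasDerivAt_zpow (2 - m) x (Or.inl hx0)).div_const d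
        have h2 : ((2 - m : ℤ) : ℝ) * x ^ (2 - m - 1) / d = x ^ (1 - m) := by
          rw [← hddef, mul_comm, mul_div_assoc, div_self hdne, mul_one]
          congr 1; ring
        rw [h2] at h1
        exact h1)
      (by
        rw [intervalIntegrable_iff_integrableOn_Icc_of_le hrle]
        exact (hderiv.mono hsub).integrableOn_compact isCompact_Icc)
      ((hzpow (1-m)).intervalIntegrable_of_Icc hrle)
    have heq : ∀ x, fbar x * x ^ (1 - m) = x ^ (1 - m) * fbar x := fun x => mul_comm _ _
    rw [hJdef]
    simp_rw [← heq]
    rw [h, hf1]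
    have : ∫ x in r..(1:ℝ), deriv fbar x * (x ^ (2 - m) / d)
        = (∫ x in r..(1:ℝ), deriv fbar x * x ^ (2 - m)) / d := by
      simp_rw [← mul_div_assoc]
      exact intervalIntegral.integral_div d _
    rw [this, ← hKdef]
    ring
  -- bound K
  have hder_le : ∀ τ ∈ Icc r (1:ℝ), deriv fbar τ ≤ A := by
    intro τ hτ
    have h1 : deriv fbar τ ≤ deriv fbar r :=
      hanti ⟨hr0.le, hr1.le⟩ (hsub hτ) hτ.1
    exact h1.trans (le_max_left _ _)
  have hKbound : K ≤ A * ((1:ℝ) - r ^ (3 - m)) / ((3:ℝ) - 4 * N) := by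
    have h1 : K ≤ ∫ τ in r..(1:ℝ), A * τ ^ (2 - m) := by
      apply intervalIntegral.integral_mono_on hrle hintK hintKA
      intro x hx
      exact mul_le_mul_of_nonneg_right (hder_le x hx) (le_of_lt (zpow_pos (hpos x hx) _))
    have h2 : (∫ τ in r..(1:ℝ), A * τ ^ (2 - m))
        = A * ((1:ℝ) - r ^ (3 - m)) / ((3:ℝ) - 4 * N) := by
      rw [intervalIntegral.integral_const_mul]
      rw [integral_zpow (Or.inr ⟨by omega, by rw [huIcc]; intro h; exact absurd h.1 (by linarith)⟩)]
      have h3 : (2 - m) + 1 = 3 - m := by ring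
      have h4 : ((2 - m : ℤ) : ℝ) + 1 = 3 - 4 * N := by push_cast [hmdef]; ring
      rw [h3, h4, one_zpow, mul_div_assoc]
    rw [← h2]; exact h1
  -- positivity constants
  have hc : (0:ℝ) < 4 * N - 2 := by nlinarith
  have he : (0:ℝ) < 4 * N - 3 := by nlinarith
  -- rewrite K bound in positive form
  have hKbound' : K ≤ A * r ^ (3 - m) / (4 * N - 3) := by
    have h5 : A * ((1:ℝ) - r ^ (3 - m)) / ((3:ℝ) - 4 * N)
        = A * (r ^ (3 - m) - 1) / (4 * N - 3) := by
      rw [div_eq_div_iff (by nlinarith) (by nlinarith)]; ring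
    have h6 : A * (r ^ (3 - m) - 1) / (4 * N - 3) ≤ A * r ^ (3 - m) / (4 * N - 3) := by
      apply div_le_div_of_nonneg_right ?_ he.le
      nlinarith [zpow_pos hr0 (3 - m)]
    calc K ≤ A * ((1:ℝ) - r ^ (3 - m)) / ((3:ℝ) - 4 * N) := hKbound
      _ = A * (r ^ (3 - m) - 1) / (4 * N - 3) := h5
      _ ≤ A * r ^ (3 - m) / (4 * N - 3) := h6
  -- assemble J bound
  have hJbound : J ≤ (fbar r * r ^ (2 - m) + A * r ^ (3 - m) / (4 * N - 3)) / (4 * N - 2) := by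
    rw [hIBP]
    have hfr : 0 ≤ fbar r := hfpos r ⟨hr0.le, hr1.le⟩
    have hq : (0:ℝ) < r ^ (2 - m) := zpow_pos hr0 _
    have : -(fbar r * (r ^ (2 - m) / d)) - K / d
        = (fbar r * r ^ (2 - m) + K) / (4 * N - 2) := by
      have hc' : (4*N-2) ≠ 0 := ne_of_gt hc
      rw [hdval, show (2:ℝ) - 4*N = -(4*N-2) from by ring, div_neg, div_neg]
      field_simp
      ring
    rw [this]
    apply div_le_div_of_nonneg_right ?_ hc.le
    linarith [hKbound']
  -- zpow identities
  have hPQ : r ^ (m - 2) * r ^ (2 - m) = 1 := by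
    rw [← zpow_add₀ hr0.ne']
    norm_num
  have hPR : r ^ (m - 2) * r ^ (3 - m) = r := by
    rw [← zpow_add₀ hr0.ne']
    norm_num
  -- final computation
  have hPpos : (0:ℝ) < r ^ (m - 2) := zpow_pos hr0 _
  have hNpos : (0:ℝ) < N := by linarith
  have hJ0 : 0 ≤ |I| := abs_nonneg _
  have hLHS : |N * r ^ (m - 2) * I| = N * r ^ (m - 2) * |I| := by
    rw [abs_mul, abs_of_nonneg (by positivity)]
  rw [one_mul, hLHS]
  calc N * r ^ (m - 2) * |I|
      ≤ N * r ^ (m - 2) * J := by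
        apply mul_le_mul_of_nonneg_left hIJ (by positivity)
    _ ≤ N * r ^ (m - 2) *
        ((fbar r * r ^ (2 - m) + A * r ^ (3 - m) / (4 * N - 3)) / (4 * N - 2)) := by
        apply mul_le_mul_of_nonneg_left hJbound (by positivity)
    _ = N * fbar r * (r ^ (m - 2) * r ^ (2 - m)) / (4 * N - 2)
        + N * A * (r ^ (m - 2) * r ^ (3 - m)) / ((4 * N - 2) * (4 * N - 3)) := by
        field_simp
    _ = N * fbar r / (4 * N - 2) + N * (r * A) / ((4 * N - 2) * (4 * N - 3)) := by
        rw [hPQ, hPR]; ring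
    _ ≤ fbar r + 1 / N * M := by
        have hfr : 0 ≤ fbar r := hfpos r ⟨hr0.le, hr1.le⟩
        have h1 : N * fbar r / (4 * N - 2) ≤ fbar r := by
          rw [div_le_iff₀ hc]; nlinarith
        have h2 : N * (r * A) / ((4 * N - 2) * (4 * N - 3)) ≤ 1 / N * M := by
          rw [div_le_iff₀ (by positivity), one_div]
          have key : N * N * (r * A) ≤ M * ((4 * N - 2) * (4 * N - 3)) := by
            have hrA0 : 0 ≤ r * A := mul_nonneg hr0.le hA0
            nlinarith [mul_le_mul_of_nonneg_left hrA (sq_nonneg N), mul_nonneg hM0 (sq_nonneg (N - 1)), mul_nonneg hM0 (sub_nonneg.2 hN), hM0]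
          calc N * (r * A) = N * N * (r * A) / N := by field_simp
            _ ≤ M * ((4 * N - 2) * (4 * N - 3)) / N :=
                div_le_div_of_nonneg_right key hNpos.le
            _ = N⁻¹ * M * ((4 * N - 2) * (4 * N - 3)) := by field_simp
        linarith
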